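/- Let H be an n×n real symmetric invertible matrix, Σ_p and Σ_n n×n real symmetric positive definite matrices, Σ_v := H⁻¹ Σ_p H⁻¹, and Δ := (Σ_v + Σ_n)⁻¹ − Σ_v⁻¹. Then for all indices i, j: |Δ(i,j)| ≤ λmax(Σ_n) · (λmax(H²))² / (λmin(Σ_p))², where λmax(A) and λmin(A) denote the largest and smallest eigenvalues of a real symmetric matrix A. -/

import Mathlib

open Matrix

/-- The largest eigenvalue of a real symmetric (Hermitian) matrix. -/
noncomputable def maxEig {n : Type*} [Fintype n] [DecidableEq n]
    {A : Matrix n n ℝ} (hA : A.IsHermitian) : ℝ := ⨆ k, hA.eigenvalues k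

/-- The smallest eigenvalue of a real symmetric (Hermitian) matrix. -/
noncomputable def minEig {n : Type*} [Fintype n] [DecidableEq n]
    {A : Matrix n n ℝ} (hA : A.IsHermitian) : ℝ := ⨅ k, hA.eigenvalues k

section Aux

set_option linter.unusedSectionVars false

variable {N : Type*} [Fintype N] [DecidableEq N]

/-- Cauchy–Schwarz for the real dot product. -/
lemma aux_dot_cs (a b : N → ℝ) :
    |a ⬝ᵥ b| ≤ Real.sqrt (a ⬝ᵥ a) * Real.sqrt (b ⬝ᵥ b) := by
  have h := Finset.sum_mul_sq_le_sq_mul_sq Finset.univ a b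
  have h2 : (a ⬝ᵥ b) ^ 2 ≤ (a ⬝ᵥ a) * (b ⬝ᵥ b) := by
    simpa [dotProduct, pow_two] using h
  calc |a ⬝ᵥ b| = Real.sqrt ((a ⬝ᵥ b) ^ 2) := (Real.sqrt_sq_eq_abs _).symm
    _ ≤ Real.sqrt ((a ⬝ᵥ a) * (b ⬝ᵥ b)) := Real.sqrt_le_sqrt h2
    _ = Real.sqrt (a ⬝ᵥ a) * Real.sqrt (b ⬝ᵥ b) := Real.sqrt_mul
          (by simpa [dotProduct] using
            Finset.sum_nonneg fun i _ => mul_self_nonneg (a i)) _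

lemma aux_dot_self_nonneg (v : N → ℝ) : 0 ≤ v ⬝ᵥ v := by
  simpa [dotProduct] using Finset.sum_nonneg fun i _ => mul_self_nonneg (v i)

lemma aux_dot_sym_mulVec {M : Matrix N N ℝ} (hM : M.IsHermitian) (x z : N → ℝ) :
    x ⬝ᵥ (M *ᵥ z) = (M *ᵥ x) ⬝ᵥ z := by
  have ht : Mᵀ = M := by
    rw [← Matrix.conjTranspose_eq_transpose_of_trivial]; exact hM
  rw [Matrix.dotProduct_mulVec, ← Matrix.mulVec_transpose, ht]

lemma aux_unitary_dot {V : Matrix N N ℝ} (hV : Vᵀ * V = 1) (a b : N → ℝ) :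
    (V *ᵥ a) ⬝ᵥ (V *ᵥ b) = a ⬝ᵥ b := by
  rw [Matrix.dotProduct_mulVec, ← Matrix.vecMul_transpose,
    Matrix.vecMul_vecMul, hV, Matrix.vecMul_one]

/-- Rayleigh quotient bounds via the spectral theorem. -/
lemma aux_rayleigh [Nonempty N] {A : Matrix N N ℝ} (hA : A.IsHermitian) (x : N → ℝ) :
    minEig hA * (x ⬝ᵥ x) ≤ x ⬝ᵥ (A *ᵥ x) ∧
      x ⬝ᵥ (A *ᵥ x) ≤ maxEig hA * (x ⬝ᵥ x) := by
  classical
  set V : Matrix N N ℝ := (Matrix.IsHermitian.eigenvectorUnitary hA : Matrix N N ℝ) with hVdef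
  have hst : star V = Vᵀ := Matrix.conjTranspose_eq_transpose_of_trivial V
  have hVV : V * Vᵀ = 1 := by
    rw [← hst]; exact Matrix.mem_unitaryGroup_iff.mp (Matrix.IsHermitian.eigenvectorUnitary hA).2
  have hVV' : Vᵀ * V = 1 := by
    rw [← hst]; exact Matrix.mem_unitaryGroup_iff'.mp (Matrix.IsHermitian.eigenvectorUnitary hA).2
  set y : N → ℝ := Vᵀ *ᵥ x with hy
  have hx : x = V *ᵥ y := by
    rw [hy, Matrix.mulVec_mulVec, hVV, Matrix.one_mulVec]
  clear_value y
  have hdiag : A = V * Matrix.diagonal hA.eigenvalues * Vᵀ := by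
    have h := hA.spectral_theorem
    rw [Unitary.conjStarAlgAut_apply, ← hVdef, hst] at h
    simpa using h
  have hAV : A * V = V * Matrix.diagonal hA.eigenvalues := by
    conv_lhs => rw [hdiag]
    rw [Matrix.mul_assoc (V * Matrix.diagonal hA.eigenvalues), hVV', Matrix.mul_one]
  have key : x ⬝ᵥ (A *ᵥ x) = y ⬝ᵥ (Matrix.diagonal hA.eigenvalues *ᵥ y) := by
    conv_lhs => rw [hx]
    rw [Matrix.mulVec_mulVec, hAV, ← Matrix.mulVec_mulVec]
    exact aux_unitary_dot hVV' _ _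
  have hform : x ⬝ᵥ (A *ᵥ x) = ∑ k, hA.eigenvalues k * (y k) ^ 2 := by
    rw [key]
    simp only [dotProduct, Matrix.mulVec_diagonal]
    exact Finset.sum_congr rfl fun k _ => by ring
  have hnorm : x ⬝ᵥ x = ∑ k, (y k) ^ 2 := by
    conv_lhs => rw [hx, aux_unitary_dot hVV']
    simp [dotProduct, pow_two]
  constructor
  · rw [hform, hnorm, Finset.mul_sum]
    apply Finset.sum_le_sum
    intro k _
    have : minEig hA ≤ hA.eigenvalues k :=
      ciInf_le (Set.Finite.bddBelow (Set.finite_range _)) k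
    exact mul_le_mul_of_nonneg_right this (sq_nonneg _)
  · rw [hform, hnorm, Finset.mul_sum]
    apply Finset.sum_le_sum
    intro k _
    have : hA.eigenvalues k ≤ maxEig hA :=
      le_ciSup (Set.Finite.bddAbove (Set.finite_range _)) k
    exact mul_le_mul_of_nonneg_right this (sq_nonneg _)

end Aux

/-- Lemma 3 of the paper: the entrywise deviation of the inverse voltage
covariance due to measurement noise is bounded by
`λmax(Σ_n) · (λmax(H²))² / (λmin(Σ_p))²`. -/
theorem stmt11 (n : ℕ) (H Sp Sn : Matrix (Fin n) (Fin n) ℝ)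
    (hH : H.IsHermitian) (hHu : IsUnit H) (hSp : Sp.PosDef) (hSn : Sn.PosDef)
    (Sv : Matrix (Fin n) (Fin n) ℝ) (hSv : Sv = H⁻¹ * Sp * H⁻¹)
    (Δ : Matrix (Fin n) (Fin n) ℝ) (hΔ : Δ = (Sv + Sn)⁻¹ - Sv⁻¹) :
    ∀ i j, |Δ i j| ≤ maxEig hSn.1 * (maxEig (hH.pow 2)) ^ 2 / (minEig hSp.1) ^ 2 := by
  intro i j
  haveI : Nonempty (Fin n) := ⟨i⟩
  classical
  -- basic invertibility facts for H
  have hHd : IsUnit H.det := (Matrix.isUnit_iff_isUnit_det H).mp hHu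
  have hHinv : H⁻¹ * H = 1 := Matrix.nonsing_inv_mul H hHd
  have hHinv' : H * H⁻¹ = 1 := Matrix.mul_nonsing_inv H hHd
  have hHih : (H⁻¹).IsHermitian := hH.inv
  -- Sv is positive definite
  have hSvform : ∀ x : Fin n → ℝ, x ⬝ᵥ (Sv *ᵥ x) = (H⁻¹ *ᵥ x) ⬝ᵥ (Sp *ᵥ (H⁻¹ *ᵥ x)) := by
    intro x
    rw [hSv, ← Matrix.mulVec_mulVec, ← Matrix.mulVec_mulVec, aux_dot_sym_mulVec hHih]
  have hSvherm : Sv.IsHermitian := by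
    rw [hSv]
    have h1 : H⁻¹ * Sp * H⁻¹ = H⁻¹ * Sp * (H⁻¹)ᴴ := by rw [hHih]
    rw [h1]
    exact Matrix.isHermitian_mul_mul_conjTranspose _ hSp.1
  have hmulinj : ∀ x : Fin n → ℝ, x ≠ 0 → H⁻¹ *ᵥ x ≠ 0 := by
    intro x hx h0
    apply hx
    have hxx : H *ᵥ (H⁻¹ *ᵥ x) = x := by
      rw [Matrix.mulVec_mulVec, hHinv', Matrix.one_mulVec]
    rw [h0, Matrix.mulVec_zero] at hxx
    exact hxx.symm
  have hSvpd : Sv.PosDef := by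
    refine Matrix.PosDef.of_dotProduct_mulVec_pos hSvherm fun x hx => ?_
    have h2 := hSp.dotProduct_mulVec_pos (hmulinj x (by simpa using hx))
    simpa [hSvform] using h2
  have hBpd : (Sv + Sn).PosDef := hSvpd.add hSn
  -- eigenvalue constants
  have hlP : 0 < minEig hSp.1 := by
    obtain ⟨k, hk⟩ := exists_eq_ciInf_of_finite (f := hSp.1.eigenvalues)
    rw [minEig, ← hk]
    exact hSp.eigenvalues_pos k
  have hH2pd : (H ^ 2).PosDef := by
    refine Matrix.PosDef.of_dotProduct_mulVec_pos (hH.pow 2) fun x hx => ?_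
    have h2 : (H ^ 2) *ᵥ x = H *ᵥ (H *ᵥ x) := by
      rw [Matrix.mulVec_mulVec, ← pow_two]
    have hnz : H *ᵥ x ≠ 0 := by
      intro h0
      apply hx
      have hxx : H⁻¹ *ᵥ (H *ᵥ x) = x := by
        rw [Matrix.mulVec_mulVec, hHinv, Matrix.one_mulVec]
      rw [h0, Matrix.mulVec_zero] at hxx
      exact hxx.symm
    have hpos : 0 < (H *ᵥ x) ⬝ᵥ (H *ᵥ x) := by
      rcases lt_or_eq_of_le (aux_dot_self_nonneg (H *ᵥ x)) with h | h
      · exact h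
      · exact absurd (dotProduct_self_eq_zero.mp h.symm) hnz
    have : x ⬝ᵥ ((H ^ 2) *ᵥ x) = (H *ᵥ x) ⬝ᵥ (H *ᵥ x) := by
      rw [h2, aux_dot_sym_mulVec hH]
    simpa [this] using hpos
  have hlH : 0 < maxEig (hH.pow 2) := by
    obtain ⟨k, hk⟩ := exists_eq_ciSup_of_finite (f := (hH.pow 2).eigenvalues)
    rw [maxEig, ← hk]
    exact hH2pd.eigenvalues_pos k
  have hlN : 0 ≤ maxEig hSn.1 := by
    obtain ⟨k, hk⟩ := exists_eq_ciSup_of_finite (f := hSn.1.eigenvalues)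
    rw [maxEig, ← hk]
    exact (hSn.eigenvalues_pos k).le
  set c : ℝ := minEig hSp.1 / maxEig (hH.pow 2) with hc
  have hcpos : 0 < c := div_pos hlP hlH
  -- coercivity of Sv and Sv + Sn
  have hcoer : ∀ x : Fin n → ℝ, c * (x ⬝ᵥ x) ≤ x ⬝ᵥ (Sv *ᵥ x) := by
    intro x
    have hy := hSvform x
    set y : Fin n → ℝ := H⁻¹ *ᵥ x with hydef
    have hxy : x = H *ᵥ y := by
      rw [hydef, Matrix.mulVec_mulVec, hHinv', Matrix.one_mulVec]
    clear_value y
    have h1 : y ⬝ᵥ ((H ^ 2) *ᵥ y) = x ⬝ᵥ x := by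
      have h2 : (H ^ 2) *ᵥ y = H *ᵥ (H *ᵥ y) := by
        rw [Matrix.mulVec_mulVec, ← pow_two]
      rw [h2, aux_dot_sym_mulVec hH, ← hxy]
    have hxx : x ⬝ᵥ x ≤ maxEig (hH.pow 2) * (y ⬝ᵥ y) := by
      rw [← h1]
      exact (aux_rayleigh (hH.pow 2) y).2
    have hSpy := (aux_rayleigh hSp.1 y).1
    calc c * (x ⬝ᵥ x) ≤ c * (maxEig (hH.pow 2) * (y ⬝ᵥ y)) :=
          mul_le_mul_of_nonneg_left hxx hcpos.le
      _ = minEig hSp.1 * (y ⬝ᵥ y) := by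
          rw [hc]; field_simp
      _ ≤ y ⬝ᵥ (Sp *ᵥ y) := hSpy
      _ = x ⬝ᵥ (Sv *ᵥ x) := hy.symm
  have hcoerB : ∀ x : Fin n → ℝ, c * (x ⬝ᵥ x) ≤ x ⬝ᵥ ((Sv + Sn) *ᵥ x) := by
    intro x
    have h1 : x ⬝ᵥ ((Sv + Sn) *ᵥ x) = x ⬝ᵥ (Sv *ᵥ x) + x ⬝ᵥ (Sn *ᵥ x) := by
      rw [Matrix.add_mulVec, dotProduct_add]
    have h2 : 0 ≤ x ⬝ᵥ (Sn *ᵥ x) := by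
      have := hSn.posSemidef.dotProduct_mulVec_nonneg x
      simpa using this
    linarith [hcoer x]
  -- inverses
  have hSvd : IsUnit Sv.det := isUnit_iff_ne_zero.mpr hSvpd.det_pos.ne'
  have hBd : IsUnit (Sv + Sn).det := isUnit_iff_ne_zero.mpr hBpd.det_pos.ne'
  have hSvi1 : Sv * Sv⁻¹ = 1 := Matrix.mul_nonsing_inv _ hSvd
  have hSvi2 : Sv⁻¹ * Sv = 1 := Matrix.nonsing_inv_mul _ hSvd
  have hBi1 : (Sv + Sn) * (Sv + Sn)⁻¹ = 1 := Matrix.mul_nonsing_inv _ hBd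
  have hSvih : (Sv⁻¹).IsHermitian := hSvherm.inv
  -- the key algebraic identity
  have hid : Sv⁻¹ * Sn * (Sv + Sn)⁻¹ = Sv⁻¹ - (Sv + Sn)⁻¹ := by
    calc Sv⁻¹ * Sn * (Sv + Sn)⁻¹
        = Sv⁻¹ * ((Sv + Sn) - Sv) * (Sv + Sn)⁻¹ := by rw [add_sub_cancel_left]
      _ = Sv⁻¹ * (Sv + Sn) * (Sv + Sn)⁻¹ - Sv⁻¹ * Sv * (Sv + Sn)⁻¹ := by
          rw [mul_sub, sub_mul]
      _ = Sv⁻¹ - (Sv + Sn)⁻¹ := by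
          rw [Matrix.mul_assoc, hBi1, Matrix.mul_one, hSvi2, Matrix.one_mul]
  set u : Fin n → ℝ := Sv⁻¹ *ᵥ Pi.single i 1 with hu
  set w : Fin n → ℝ := (Sv + Sn)⁻¹ *ᵥ Pi.single j 1 with hw
  have hΔij : Δ i j = -(u ⬝ᵥ (Sn *ᵥ w)) := by
    have hent : (Sv⁻¹ * Sn * (Sv + Sn)⁻¹) i j = u ⬝ᵥ (Sn *ᵥ w) := by
      have h1 : (Sv⁻¹ * Sn * (Sv + Sn)⁻¹) i j
          = Pi.single i 1 ⬝ᵥ ((Sv⁻¹ * Sn * (Sv + Sn)⁻¹) *ᵥ Pi.single j 1) := by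
        simp [Matrix.mulVec_single, single_dotProduct]
      rw [h1, ← Matrix.mulVec_mulVec, ← Matrix.mulVec_mulVec,
        aux_dot_sym_mulVec hSvih, ← hu, ← hw]
    rw [hΔ]
    have : ((Sv + Sn)⁻¹ - Sv⁻¹) i j = -((Sv⁻¹ - (Sv + Sn)⁻¹) i j) := by
      simp [Matrix.sub_apply]
    rw [this, ← hid, hent]
  clear_value u w
  -- square root of Sn, Cauchy-Schwarz
  obtain ⟨C, hCh, hCC⟩ : ∃ C : Matrix (Fin n) (Fin n) ℝ, C.IsHermitian ∧ C * C = Sn := by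
    open scoped MatrixOrder in
    exact ⟨CFC.sqrt Sn, (Matrix.nonneg_iff_posSemidef.mp (CFC.sqrt_nonneg Sn)).1,
      CFC.sqrt_mul_sqrt_self Sn (Matrix.nonneg_iff_posSemidef.mpr hSn.posSemidef)⟩
  have hsplit : ∀ a b : Fin n → ℝ, a ⬝ᵥ (Sn *ᵥ b) = (C *ᵥ a) ⬝ᵥ (C *ᵥ b) := by
    intro a b
    rw [← hCC, ← Matrix.mulVec_mulVec, aux_dot_sym_mulVec hCh]
  -- norm bounds on u and w
  have hnormbound : ∀ (M : Matrix (Fin n) (Fin n) ℝ) (v : Fin n → ℝ) (k : Fin n),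
      (∀ x : Fin n → ℝ, c * (x ⬝ᵥ x) ≤ x ⬝ᵥ (M *ᵥ x)) → M *ᵥ v = Pi.single k 1 →
      Real.sqrt (v ⬝ᵥ v) ≤ 1 / c := by
    intro M v k hco hMv
    have h1 : c * (v ⬝ᵥ v) ≤ v k := by
      have := hco v
      rw [hMv] at this
      simpa [dotProduct_single] using this
    have hvv : 0 ≤ v ⬝ᵥ v := aux_dot_self_nonneg v
    have h4 : v k ≤ Real.sqrt (v ⬝ᵥ v) := by
      have h5 : (v k) ^ 2 ≤ v ⬝ᵥ v := by
        have := Finset.single_le_sum (f := fun t => v t * v t)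
          (fun t _ => mul_self_nonneg _) (Finset.mem_univ k)
        simpa [dotProduct, pow_two] using this
      calc v k ≤ |v k| := le_abs_self _
        _ = Real.sqrt ((v k) ^ 2) := (Real.sqrt_sq_eq_abs _).symm
        _ ≤ _ := Real.sqrt_le_sqrt h5
    have hss : v ⬝ᵥ v = Real.sqrt (v ⬝ᵥ v) ^ 2 := (Real.sq_sqrt hvv).symm
    have hkey : c * Real.sqrt (v ⬝ᵥ v) ^ 2 ≤ Real.sqrt (v ⬝ᵥ v) := by
      rw [← hss]; linarith
    rw [le_div_iff₀ hcpos]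
    nlinarith [Real.sqrt_nonneg (v ⬝ᵥ v)]
  have hubound : Real.sqrt (u ⬝ᵥ u) ≤ 1 / c := by
    refine hnormbound Sv u i hcoer ?_
    rw [hu, Matrix.mulVec_mulVec, hSvi1, Matrix.one_mulVec]
  have hwbound : Real.sqrt (w ⬝ᵥ w) ≤ 1 / c := by
    refine hnormbound (Sv + Sn) w j hcoerB ?_
    rw [hw, Matrix.mulVec_mulVec, hBi1, Matrix.one_mulVec]
  -- quadratic form bounds through λmax(Sn)
  have hqbound : ∀ v : Fin n → ℝ,
      Real.sqrt ((C *ᵥ v) ⬝ᵥ (C *ᵥ v)) ≤ Real.sqrt (maxEig hSn.1) * Real.sqrt (v ⬝ᵥ v) := by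
    intro v
    have h1 : (C *ᵥ v) ⬝ᵥ (C *ᵥ v) = v ⬝ᵥ (Sn *ᵥ v) := (hsplit v v).symm
    have h2 : v ⬝ᵥ (Sn *ᵥ v) ≤ maxEig hSn.1 * (v ⬝ᵥ v) := (aux_rayleigh hSn.1 v).2
    calc Real.sqrt ((C *ᵥ v) ⬝ᵥ (C *ᵥ v)) ≤ Real.sqrt (maxEig hSn.1 * (v ⬝ᵥ v)) := by
          rw [h1]; exact Real.sqrt_le_sqrt h2
      _ = Real.sqrt (maxEig hSn.1) * Real.sqrt (v ⬝ᵥ v) := Real.sqrt_mul hlN _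
  -- final estimate
  have hfinal : |Δ i j| ≤ maxEig hSn.1 * (1 / c) ^ 2 := by
    rw [hΔij, abs_neg, hsplit u w]
    calc |(C *ᵥ u) ⬝ᵥ (C *ᵥ w)|
        ≤ Real.sqrt ((C *ᵥ u) ⬝ᵥ (C *ᵥ u)) * Real.sqrt ((C *ᵥ w) ⬝ᵥ (C *ᵥ w)) :=
          aux_dot_cs _ _
      _ ≤ (Real.sqrt (maxEig hSn.1) * Real.sqrt (u ⬝ᵥ u)) *
            (Real.sqrt (maxEig hSn.1) * Real.sqrt (w ⬝ᵥ w)) := by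
          apply mul_le_mul (hqbound u) (hqbound w) (Real.sqrt_nonneg _)
          positivity
      _ ≤ (Real.sqrt (maxEig hSn.1) * (1 / c)) *
            (Real.sqrt (maxEig hSn.1) * (1 / c)) := by
          apply mul_le_mul
          · exact mul_le_mul_of_nonneg_left hubound (Real.sqrt_nonneg _)
          · exact mul_le_mul_of_nonneg_left hwbound (Real.sqrt_nonneg _)
          · positivity
          · positivity
      _ = maxEig hSn.1 * (1 / c) ^ 2 := by
          rw [show (Real.sqrt (maxEig hSn.1) * (1 / c)) * (Real.sqrt (maxEig hSn.1) * (1 / c))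
              = (Real.sqrt (maxEig hSn.1) * Real.sqrt (maxEig hSn.1)) * (1 / c) ^ 2 by ring,
            Real.mul_self_sqrt hlN]
  calc |Δ i j| ≤ maxEig hSn.1 * (1 / c) ^ 2 := hfinal
    _ = maxEig hSn.1 * (maxEig (hH.pow 2)) ^ 2 / (minEig hSp.1) ^ 2 := by
        rw [hc]
        field_simp
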